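/- Let k be a field and q ∈ k nonzero. Let W be the 4-dimensional k-vector space with basis {a, c, a*, c*}. Define linear maps Δ₁, Δ̃₁ : W → W ⊗ W by Δ₁a = a⊗a − q·c*⊗c, Δ₁c = c⊗a + a*⊗c, Δ₁a* = a*⊗a* − q·c⊗c*, Δ₁c* = c*⊗a* + a⊗c*, and Δ̃₁a = c*⊗a + a⊗c, Δ̃₁c = c⊗c − q⁻¹·a*⊗a, Δ̃₁a* = c⊗a* + a*⊗c*, Δ̃₁c* = c*⊗c* − q⁻¹·a⊗a*. Then Δ̃₁ is coassociative, and both (Δ̃₁ ⊗ id) ∘ Δ₁ = (id ⊗ Δ₁) ∘ Δ̃₁ and (Δ₁ ⊗ id) ∘ Δ̃₁ = (id ⊗ Δ̃₁) ∘ Δ₁ hold; moreover the linear map ε̃₁ with ε̃₁(c) = ε̃₁(c*) = 1 and ε̃₁(a) = ε̃₁(a*) = 0 satisfies (ε̃₁ ⊗ id) ∘ Δ̃₁ = id. Thus the left coalgebra (W, Δ̃₁) is achirally entangled to the usual coassociative coalgebra part (W, Δ₁) of SU_q(2). -/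

import Mathlib

open TensorProduct

noncomputable section

variable {k V : Type*} [Field k] [AddCommGroup V] [Module k V]

/-- `(Δ' ⊗ id) ∘ Δ` composed with the standard associator, as a map `V → V ⊗ (V ⊗ V)`. -/
def lcomp (Δ' Δ : V →ₗ[k] V ⊗[k] V) : V →ₗ[k] V ⊗[k] (V ⊗[k] V) :=
  (TensorProduct.assoc k V V V).toLinearMap ∘ₗ TensorProduct.map Δ' LinearMap.id ∘ₗ Δ

/-- `(id ⊗ Δ') ∘ Δ` as a map `V → V ⊗ (V ⊗ V)`. -/
def rcomp (Δ' Δ : V →ₗ[k] V ⊗[k] V) : V →ₗ[k] V ⊗[k] (V ⊗[k] V) :=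
  TensorProduct.map LinearMap.id Δ' ∘ₗ Δ

/-- Coassociativity of a coproduct: `(Δ ⊗ id) ∘ Δ = (id ⊗ Δ) ∘ Δ`. -/
def Coassoc (Δ : V →ₗ[k] V ⊗[k] V) : Prop := lcomp Δ Δ = rcomp Δ Δ

/-- `(D, Δ, Δ̃)` is a coassociative co-dialgebra: both coproducts are coassociative,
`(id ⊗ Δ) ∘ Δ = (id ⊗ Δ̃) ∘ Δ`, `(Δ̃ ⊗ id) ∘ Δ̃ = (Δ ⊗ id) ∘ Δ̃`, and the entanglement
equation `(Δ̃ ⊗ id) ∘ Δ = (id ⊗ Δ) ∘ Δ̃` holds. -/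
def CoDialgebra (Δ Δ' : V →ₗ[k] V ⊗[k] V) : Prop :=
  Coassoc Δ ∧ Coassoc Δ' ∧
  rcomp Δ Δ = rcomp Δ' Δ ∧
  lcomp Δ' Δ' = lcomp Δ Δ' ∧
  lcomp Δ' Δ = rcomp Δ Δ'

/-- On the 4-dimensional space `W` with basis `{a, c, a*, c*}` carrying
the usual coproduct `Δ₁` of `SU_q(2)` and the left coproduct `Δ̃₁` as given: `Δ̃₁` is
coassociative, `(Δ̃₁ ⊗ id)Δ₁ = (id ⊗ Δ₁)Δ̃₁` and `(Δ₁ ⊗ id)Δ̃₁ = (id ⊗ Δ̃₁)Δ₁` (achiral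
entanglement), and `ε̃₁` with `ε̃₁(c) = ε̃₁(c*) = 1`, `ε̃₁(a) = ε̃₁(a*) = 0` is a left
counit for `Δ̃₁`. -/
theorem stmt12 (k W : Type*) [Field k] [AddCommGroup W] [Module k W]
    (q : k) (hq : q ≠ 0)
    (bs : Module.Basis (Fin 4) k W)
    (a c astar cstar : W)
    (ha : a = bs 0) (hc : c = bs 1) (has : astar = bs 2) (hcs : cstar = bs 3)
    (Δ₁ Δ₁' : W →ₗ[k] W ⊗[k] W)
    (hΔa : Δ₁ a = a ⊗ₜ[k] a - q • (cstar ⊗ₜ[k] c))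
    (hΔc : Δ₁ c = c ⊗ₜ[k] a + astar ⊗ₜ[k] c)
    (hΔas : Δ₁ astar = astar ⊗ₜ[k] astar - q • (c ⊗ₜ[k] cstar))
    (hΔcs : Δ₁ cstar = cstar ⊗ₜ[k] astar + a ⊗ₜ[k] cstar)
    (hΔ'a : Δ₁' a = cstar ⊗ₜ[k] a + a ⊗ₜ[k] c)
    (hΔ'c : Δ₁' c = c ⊗ₜ[k] c - q⁻¹ • (astar ⊗ₜ[k] a))
    (hΔ'as : Δ₁' astar = c ⊗ₜ[k] astar + astar ⊗ₜ[k] cstar)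
    (hΔ'cs : Δ₁' cstar = cstar ⊗ₜ[k] cstar - q⁻¹ • (a ⊗ₜ[k] astar))
    (ε' : W →ₗ[k] k)
    (hεc : ε' c = 1) (hεcs : ε' cstar = 1) (hεa : ε' a = 0) (hεas : ε' astar = 0) :
    Coassoc Δ₁' ∧
    lcomp Δ₁' Δ₁ = rcomp Δ₁ Δ₁' ∧
    lcomp Δ₁ Δ₁' = rcomp Δ₁' Δ₁ ∧
    (TensorProduct.lid k W).toLinearMap ∘ₗ TensorProduct.map ε' LinearMap.id ∘ₗ Δ₁'
      = LinearMap.id := by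
  subst ha hc has hcs
  refine ⟨?_, ?_, ?_, ?_⟩ <;>
  · refine bs.ext fun i => ?_
    fin_cases i <;>
    · simp only [Coassoc, lcomp, rcomp, LinearMap.comp_apply, Fin.isValue, Fin.reduceFinMk,
        hΔa, hΔc, hΔas, hΔcs, hΔ'a, hΔ'c, hΔ'as, hΔ'cs, hεa, hεc, hεas, hεcs,
        map_add, map_sub, map_smul, TensorProduct.map_tmul, LinearMap.id_coe, id_eq,
        TensorProduct.assoc_tmul, LinearEquiv.coe_coe, TensorProduct.lid_tmul,
        TensorProduct.tmul_sub, TensorProduct.sub_tmul, TensorProduct.tmul_add,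
        TensorProduct.add_tmul, ← TensorProduct.smul_tmul', TensorProduct.tmul_smul,
        one_smul, zero_smul, smul_smul, inv_mul_cancel₀ hq, mul_inv_cancel₀ hq]
      match_scalars <;> field_simp
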